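/- A group has rational word problem if and only if it is finite; consequently, a semigroup with rational word problem cannot contain an infinite subgroup. -/

import Mathlib

/-- The monoid homomorphism `(A ⊕ A)* → A* × A*` sending `inl a ↦ (a, ε)` and
`inr a ↦ (ε, a)`, used to define rational (asynchronous two-tape) relations. -/
def twoTapeHom (A : Type) : FreeMonoid (A ⊕ A) →* FreeMonoid A × FreeMonoid A :=
  FreeMonoid.lift (Sum.elim (fun a => (FreeMonoid.of a, 1)) (fun a => (1, FreeMonoid.of a)))

/-- A relation `R ⊆ A* × A*` is rational if it is the image of a regular language
over the alphabet `A ⊕ A` under `twoTapeHom`; equivalently, it is recognised by a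
two-tape asynchronous finite automaton. -/
def IsRationalRel {A : Type} (R : Set (FreeMonoid A × FreeMonoid A)) : Prop :=
  ∃ L : Language (A ⊕ A), L.IsRegular ∧
    twoTapeHom A '' {w : FreeMonoid (A ⊕ A) | w.toList ∈ L} = R

/-- The canonical embedding of the free semigroup `A⁺` into the free monoid `A*`. -/
def freeSemigroupToWord {A : Type} : FreeSemigroup A →ₙ* FreeMonoid A :=
  FreeSemigroup.lift FreeMonoid.of

/-- The two-tape word problem `ι(S,A)` of a semigroup `S` with respect to a
(generating) map `f : A → S`: all pairs of nonempty words over `A` whose images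
in `S` coincide, viewed as a relation on words in `A*`. -/
def wordProblem {A S : Type} [Semigroup S] (f : A → S) :
    Set (FreeMonoid A × FreeMonoid A) :=
  {p | ∃ w₁ w₂ : FreeSemigroup A,
        FreeSemigroup.lift f w₁ = FreeSemigroup.lift f w₂ ∧
        p = (freeSemigroupToWord w₁, freeSemigroupToWord w₂)}

/-- A semigroup has rational word problem if it is generated by some finite set `A`
(i.e. there is `f : A → S` with the induced homomorphism `A⁺ → S` surjective) for
which the two-tape word problem is a rational relation. -/
def HasRationalWordProblem (S : Type) [Semigroup S] : Prop :=
  ∃ (A : Type) (_ : Fintype A) (f : A → S),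
    Function.Surjective ⇑(FreeSemigroup.lift f) ∧ IsRationalRel (wordProblem f)

namespace AnisimovAux

variable {A : Type}

/-- Left projection of a two-tape word. -/
def projl : List (A ⊕ A) → List A :=
  List.filterMap (Sum.elim some (fun _ => none))

/-- Right projection of a two-tape word. -/
def projr : List (A ⊕ A) → List A :=
  List.filterMap (Sum.elim (fun _ => none) some)

@[simp] lemma projl_nil : projl ([] : List (A ⊕ A)) = [] := rfl
@[simp] lemma projr_nil : projr ([] : List (A ⊕ A)) = [] := rfl
@[simp] lemma projl_cons_inl (a : A) (l : List (A ⊕ A)) :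
    projl (Sum.inl a :: l) = a :: projl l := rfl
@[simp] lemma projl_cons_inr (a : A) (l : List (A ⊕ A)) :
    projl (Sum.inr a :: l) = projl l := rfl
@[simp] lemma projr_cons_inl (a : A) (l : List (A ⊕ A)) :
    projr (Sum.inl a :: l) = projr l := rfl
@[simp] lemma projr_cons_inr (a : A) (l : List (A ⊕ A)) :
    projr (Sum.inr a :: l) = a :: projr l := rfl
@[simp] lemma projl_append (l₁ l₂ : List (A ⊕ A)) :
    projl (l₁ ++ l₂) = projl l₁ ++ projl l₂ := List.filterMap_append ..
@[simp] lemma projr_append (l₁ l₂ : List (A ⊕ A)) :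
    projr (l₁ ++ l₂) = projr l₁ ++ projr l₂ := List.filterMap_append ..
@[simp] lemma projl_map_inl (l : List A) : projl (l.map Sum.inl) = l := by
  induction l with | nil => rfl | cons a l ih => simp [ih]
@[simp] lemma projl_map_inr (l : List A) : projl (l.map Sum.inr) = [] := by
  induction l with | nil => rfl | cons a l ih => simp [ih]
@[simp] lemma projr_map_inl (l : List A) : projr (l.map Sum.inl) = [] := by
  induction l with | nil => rfl | cons a l ih => simp [ih]
@[simp] lemma projr_map_inr (l : List A) : projr (l.map Sum.inr) = l := by
  induction l with | nil => rfl | cons a l ih => simp [ih]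

lemma eq_map_inr_of_projl_nil : ∀ {w : List (A ⊕ A)}, projl w = [] → w = (projr w).map Sum.inr
  | [], _ => rfl
  | Sum.inl a :: l, h => by simp at h
  | Sum.inr a :: l, h => by
      rw [projr_cons_inr, List.map_cons]
      exact congrArg (Sum.inr a :: ·) (eq_map_inr_of_projl_nil (by simpa using h))

lemma twoTapeHom_ofList (l : List (A ⊕ A)) :
    twoTapeHom A (FreeMonoid.ofList l)
      = (FreeMonoid.ofList (projl l), FreeMonoid.ofList (projr l)) := by
  induction l with
  | nil => rfl
  | cons c l ih =>
    rw [FreeMonoid.ofList_cons, map_mul, ih]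
    cases c with
    | inl a =>
      have h1 : twoTapeHom A (FreeMonoid.of (Sum.inl a : A ⊕ A))
          = (FreeMonoid.of a, 1) := rfl
      rw [h1, projl_cons_inl, projr_cons_inl, FreeMonoid.ofList_cons,
        Prod.mk_mul_mk, one_mul]
    | inr a =>
      have h1 : twoTapeHom A (FreeMonoid.of (Sum.inr a : A ⊕ A))
          = (1, FreeMonoid.of a) := rfl
      rw [h1, projl_cons_inr, projr_cons_inr, FreeMonoid.ofList_cons,
        Prod.mk_mul_mk, one_mul]

lemma fsw_toList (w : FreeSemigroup A) :
    (freeSemigroupToWord w).toList = w.head :: w.tail := by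
  induction w with
  | ih1 a => rfl
  | ih2 x y hx hy =>
    rw [map_mul, FreeMonoid.toList_mul, hy]
    rfl

lemma fsw_toList_ne_nil (w : FreeSemigroup A) :
    (freeSemigroupToWord w).toList ≠ [] := by
  rw [fsw_toList]; exact List.cons_ne_nil _ _

lemma fsw_injective : Function.Injective (freeSemigroupToWord (A := A)) := by
  intro w w' h
  have h2 := congrArg FreeMonoid.toList h
  rw [fsw_toList, fsw_toList] at h2
  exact FreeSemigroup.ext (List.head_eq_of_cons_eq h2) (List.tail_eq_of_cons_eq h2)

lemma exists_fsw_eq : ∀ (l : List A), l ≠ [] →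
    ∃ w : FreeSemigroup A, freeSemigroupToWord w = FreeMonoid.ofList l
  | [], h => absurd rfl h
  | [a], _ => ⟨FreeSemigroup.of a, rfl⟩
  | a :: b :: t, _ => by
      obtain ⟨w, hw⟩ := exists_fsw_eq (b :: t) (List.cons_ne_nil _ _)
      exact ⟨FreeSemigroup.of a * w, by
        rw [map_mul, hw, FreeMonoid.ofList_cons]; rfl⟩

lemma lift_eq_prod {G : Type} [Monoid G] (f : A → G) (w : FreeSemigroup A) :
    FreeSemigroup.lift f w = (((freeSemigroupToWord w).toList).map f).prod := by
  induction w with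
  | ih1 a => simp [fsw_toList]
  | ih2 x y hx hy =>
    rw [map_mul, map_mul, FreeMonoid.toList_mul, List.map_append, List.prod_append, hy, hx]

section Slice

variable {σ : Type*} (M : DFA (A ⊕ A) σ) (v : List A)

/-- The two-tape segment `inr v[i..j)`. -/
def seg (v : List A) (i j : ℕ) : List (A ⊕ A) := ((v.drop i).take (j - i)).map Sum.inr

/-- An NFA over `A` recognising the words `u` such that some two-tape word accepted by
`M` has left projection `u` and right projection `v`. -/
def sliceNFA : NFA A (σ × Fin (v.length + 1)) where
  start := { p | p.1 = M.evalFrom M.start (seg v 0 p.2) }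
  step := fun p a =>
    { q | (p.2 : ℕ) ≤ q.2 ∧ q.1 = M.evalFrom (M.step p.1 (Sum.inl a)) (seg v p.2 q.2) }
  accept := { p | p.2 = Fin.last v.length ∧ p.1 ∈ M.accept }

lemma projl_decomp : ∀ (w' : List (A ⊕ A)) (u : List A) (a : A),
    projl w' = u ++ [a] →
    ∃ (w : List (A ⊕ A)) (z : List A),
      w' = w ++ Sum.inl a :: z.map Sum.inr ∧ projl w = u ∧ projr w' = projr w ++ z := by
  intro w'
  induction w' using List.reverseRecOn with
  | nil => intro u a h; simp at h
  | append_singleton w'' c ih =>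
    intro u a h
    cases c with
    | inl b =>
      rw [projl_append, projl_cons_inl, projl_nil] at h
      obtain ⟨h1, h2⟩ := List.append_inj' h rfl
      obtain rfl : b = a := by simpa using h2
      exact ⟨w'', [], by simp, h1, by simp⟩
    | inr b =>
      rw [projl_append, projl_cons_inr, projl_nil, List.append_nil] at h
      obtain ⟨w, z, hw, hp, hr⟩ := ih u a h
      refine ⟨w, z ++ [b], ?_, hp, ?_⟩
      · rw [hw]; simp
      · rw [projr_append, hr]; simp

lemma mem_sliceNFA_eval (u : List A) :
    ∀ p : σ × Fin (v.length + 1), p ∈ (sliceNFA M v).eval u ↔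
      ∃ w : List (A ⊕ A), M.eval w = p.1 ∧ projl w = u ∧ projr w = v.take p.2 := by
  induction u using List.reverseRecOn with
  | nil =>
    intro p
    show p.1 = _ ↔ _
    have hseg : seg v 0 (p.2 : ℕ) = (v.take (p.2 : ℕ)).map Sum.inr := by
      unfold seg; rw [Nat.sub_zero, List.drop_zero]
    constructor
    · intro h
      refine ⟨(v.take (p.2 : ℕ)).map Sum.inr, ?_, projl_map_inr _, projr_map_inr _⟩
      rw [h, hseg]; rfl
    · rintro ⟨w, hw, hl, hr⟩
      rw [eq_map_inr_of_projl_nil hl, hr] at hw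
      rw [← hw, hseg]; rfl
  | append_singleton u a ih =>
    intro p
    rw [NFA.eval_append_singleton, NFA.mem_stepSet]
    constructor
    · rintro ⟨q, hq, hle, hstep⟩
      obtain ⟨w, hw, hl, hr⟩ := (ih q).mp hq
      refine ⟨w ++ Sum.inl a :: seg v q.2 p.2, ?_, ?_, ?_⟩
      · have h1 : M.eval (w ++ Sum.inl a :: seg v q.2 p.2)
            = M.evalFrom (M.step (M.eval w) (Sum.inl a)) (seg v q.2 p.2) := by
          show M.evalFrom M.start _ = _
          rw [DFA.evalFrom_of_append]; rfl
        rw [h1, hw]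
        exact hstep.symm
      · rw [projl_append, hl, projl_cons_inl]
        unfold seg; rw [projl_map_inr]
      · rw [projr_append, hr, projr_cons_inl]
        unfold seg; rw [projr_map_inr]
        have h2 : (p.2 : ℕ) = (q.2 : ℕ) + ((p.2 : ℕ) - (q.2 : ℕ)) := by omega
        rw [h2, List.take_add, Nat.add_sub_cancel_left]
    · rintro ⟨w', hw', hl, hr⟩
      obtain ⟨w, z, rfl, hp, hrr⟩ := projl_decomp w' u a hl
      rw [hrr] at hr
      have hlen : (projr w).length + z.length = min (p.2 : ℕ) v.length := by
        have := congrArg List.length hr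
        simpa using this
      have hple : (p.2 : ℕ) ≤ v.length := Nat.lt_succ_iff.mp p.2.isLt
      have hile : (projr w).length ≤ (p.2 : ℕ) := by omega
      set i : Fin (v.length + 1) := ⟨(projr w).length, by omega⟩ with hi
      have hrw : projr w = v.take (i : ℕ) := by
        have h1 : (v.take (p.2 : ℕ)).take (projr w).length = projr w := by
          rw [← hr, List.take_left]
        rw [← h1, List.take_take, min_eq_left hile]
      have hz : z = (v.drop (i : ℕ)).take ((p.2 : ℕ) - (i : ℕ)) := by
        have h1 : (v.take (p.2 : ℕ)).drop (projr w).length = z := by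
          rw [← hr, List.drop_left]
        rw [← h1, List.drop_take]
      have hseg : seg v (i : ℕ) (p.2 : ℕ) = z.map Sum.inr := by
        unfold seg; rw [← hz]
      have heval : p.1 = M.evalFrom (M.step (M.eval w) (Sum.inl a)) (z.map Sum.inr) := by
        rw [← hw']
        show M.evalFrom M.start _ = _
        rw [DFA.evalFrom_of_append]; rfl
      refine ⟨(M.eval w, i), (ih _).mpr ⟨w, rfl, hp, hrw⟩, hile, ?_⟩
      show p.1 = M.evalFrom (M.step (M.eval w) (Sum.inl a)) (seg v (i : ℕ) (p.2 : ℕ))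
      rw [hseg]
      exact heval

lemma mem_sliceNFA_accepts (u : List A) :
    u ∈ (sliceNFA M v).accepts ↔
      ∃ w : List (A ⊕ A), w ∈ M.accepts ∧ projl w = u ∧ projr w = v := by
  rw [NFA.mem_accepts]
  constructor
  · rintro ⟨p, ⟨hp2, hp1⟩, hpe⟩
    obtain ⟨w, hw, hl, hr⟩ := (mem_sliceNFA_eval M v u p).mp hpe
    refine ⟨w, ?_, hl, ?_⟩
    · rw [DFA.mem_accepts, hw]; exact hp1
    · rw [hr, hp2]; simp
  · rintro ⟨w, hw, hl, hr⟩
    refine ⟨(M.eval w, Fin.last v.length), ⟨rfl, hw⟩, ?_⟩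
    refine (mem_sliceNFA_eval M v u _).mpr ⟨w, rfl, hl, ?_⟩
    rw [hr]; simp

end Slice

lemma subsemigroup_finite {S : Type} [Semigroup S] (h : HasRationalWordProblem S)
    (T : Subsemigroup S) (e : ↥T) (he : ∀ x : ↥T, e * x = x ∧ x * e = x)
    (hinv : ∀ x : ↥T, ∃ y : ↥T, x * y = e ∧ y * x = e) : Finite ↥T := by
  classical
  obtain ⟨A, hA, f, hsurj, L, ⟨σ, hσ, M, hM⟩, himg⟩ := h
  haveI := hA
  haveI := hσ
  choose rep hrep using fun t : ↥T => hsurj (t : S)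
  set v : List A := (freeSemigroupToWord (rep e)).toList with hv
  have key : ∀ u : List A, u ∈ (sliceNFA M v).accepts ↔
      (FreeMonoid.ofList u, FreeMonoid.ofList v) ∈ wordProblem f := by
    intro u
    rw [mem_sliceNFA_accepts, ← himg]
    constructor
    · rintro ⟨w, hw, hl, hr⟩
      refine ⟨FreeMonoid.ofList w, ?_, ?_⟩
      · show (FreeMonoid.ofList w).toList ∈ L
        rw [← hM]; exact hw
      · rw [twoTapeHom_ofList, hl, hr]
    · rintro ⟨w, hw, hweq⟩
      have h2 : (FreeMonoid.ofList (projl w.toList), FreeMonoid.ofList (projr w.toList))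
          = (FreeMonoid.ofList u, FreeMonoid.ofList v) := by
        rw [← twoTapeHom_ofList, FreeMonoid.ofList_toList, hweq]
      rw [Prod.mk.injEq] at h2
      refine ⟨w.toList, ?_, FreeMonoid.ofList.injective h2.1, FreeMonoid.ofList.injective h2.2⟩
      rw [← hM] at hw; exact hw
  set D := (sliceNFA M v).toDFA with hD
  have hDkey : ∀ u : List A, u ∈ D.accepts ↔
      (FreeMonoid.ofList u, FreeMonoid.ofList v) ∈ wordProblem f := by
    intro u
    rw [show D.accepts = (sliceNFA M v).accepts from NFA.toDFA_correct]
    exact key u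
  refine Finite.of_injective
    (fun t : ↥T => D.eval (freeSemigroupToWord (rep t)).toList) ?_
  intro t₁ t₂ hval
  have hval' : D.eval (freeSemigroupToWord (rep t₁)).toList
      = D.eval (freeSemigroupToWord (rep t₂)).toList := hval
  obtain ⟨y, hy1, hy2⟩ := hinv t₁
  have hcoe : ∀ (x z : ↥T), x * z = e →
      FreeSemigroup.lift f (rep x * rep z) = FreeSemigroup.lift f (rep e) := by
    intro x z hxz
    rw [map_mul, hrep, hrep, hrep]
    have := congrArg (Subtype.val) hxz
    push_cast at this
    exact this
  have hofl : ∀ (x z : ↥T),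
      FreeMonoid.ofList ((freeSemigroupToWord (rep x)).toList
        ++ (freeSemigroupToWord (rep z)).toList) = freeSemigroupToWord (rep x * rep z) := by
    intro x z
    rw [FreeMonoid.ofList_append, FreeMonoid.ofList_toList, FreeMonoid.ofList_toList, map_mul]
  have h1 : ((freeSemigroupToWord (rep t₁)).toList
      ++ (freeSemigroupToWord (rep y)).toList) ∈ D.accepts := by
    rw [hDkey]
    exact ⟨rep t₁ * rep y, rep e, hcoe t₁ y hy1,
      by rw [Prod.mk.injEq, hofl]; exact ⟨rfl, by rw [hv, FreeMonoid.ofList_toList]⟩⟩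
  have h2 : ((freeSemigroupToWord (rep t₂)).toList
      ++ (freeSemigroupToWord (rep y)).toList) ∈ D.accepts := by
    rw [DFA.mem_accepts] at h1 ⊢
    have e1 : D.eval ((freeSemigroupToWord (rep t₂)).toList
        ++ (freeSemigroupToWord (rep y)).toList)
        = D.eval ((freeSemigroupToWord (rep t₁)).toList
        ++ (freeSemigroupToWord (rep y)).toList) := by
      show D.evalFrom D.start _ = D.evalFrom D.start _
      rw [DFA.evalFrom_of_append, DFA.evalFrom_of_append]
      rw [show D.evalFrom D.start (freeSemigroupToWord (rep t₂)).toList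
        = D.evalFrom D.start (freeSemigroupToWord (rep t₁)).toList from hval'.symm]
    rw [e1]
    exact h1
  rw [hDkey] at h2
  obtain ⟨w₁, w₂, hw12, hpair⟩ := h2
  rw [Prod.mk.injEq] at hpair
  have hw1 : w₁ = rep t₂ * rep y := by
    apply fsw_injective
    rw [← hpair.1, hofl]
  have hw2 : w₂ = rep e := by
    apply fsw_injective
    rw [← hpair.2, hv, FreeMonoid.ofList_toList]
  rw [hw1, hw2] at hw12
  rw [map_mul, hrep, hrep, hrep] at hw12
  have ht2y : t₂ * y = e := by
    apply Subtype.ext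
    push_cast
    exact hw12
  have : t₂ = t₁ := by
    calc t₂ = t₂ * e := ((he t₂).2).symm
    _ = t₂ * (y * t₁) := by rw [hy2]
    _ = (t₂ * y) * t₁ := (mul_assoc _ _ _).symm
    _ = e * t₁ := by rw [ht2y]
    _ = t₁ := (he t₁).1
  exact this.symm

section FiniteGroup

variable {G : Type} [Group G]

/-- Update an optional running product by one more letter. -/
def upd : Option G → G → Option G
  | none, a => some a
  | some g, a => some (g * a)

@[simp] lemma upd_none (a : G) : upd none a = some a := rfl
@[simp] lemma upd_some (g a : G) : upd (some g) a = some (g * a) := rfl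

lemma foldl_upd_some (g : G) : ∀ l : List G, List.foldl upd (some g) l = some (g * l.prod) := by
  intro l
  induction l generalizing g with
  | nil => simp
  | cons a l ih => simp [ih, mul_assoc]

lemma foldl_upd_none_cons (a : G) (l : List G) :
    List.foldl upd none (a :: l) = some ((a :: l).prod) := by
  simp [foldl_upd_some]

/-- The two-tape DFA tracking the running products of both tapes. -/
def pairDFA (G : Type) [Group G] : DFA (G ⊕ G) (Option G × Option G) where
  step := fun p c => Sum.elim (fun a => (upd p.1 a, p.2)) (fun a => (p.1, upd p.2 a)) c
  start := (none, none)
  accept := { p | ∃ g : G, p = (some g, some g) }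

lemma pairDFA_evalFrom : ∀ (w : List (G ⊕ G)) (p : Option G × Option G),
    (pairDFA G).evalFrom p w = (List.foldl upd p.1 (projl w), List.foldl upd p.2 (projr w))
  | [], p => rfl
  | Sum.inl a :: w, p => by
      show (pairDFA G).evalFrom (upd p.1 a, p.2) w = _
      rw [pairDFA_evalFrom w]
      simp
  | Sum.inr a :: w, p => by
      show (pairDFA G).evalFrom (p.1, upd p.2 a) w = _
      rw [pairDFA_evalFrom w]
      simp

lemma mem_pairDFA_accepts (w : List (G ⊕ G)) :
    w ∈ (pairDFA G).accepts ↔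
      projl w ≠ [] ∧ projr w ≠ [] ∧ (projl w).prod = (projr w).prod := by
  rw [DFA.mem_accepts]
  show (pairDFA G).evalFrom (none, none) w ∈ _ ↔ _
  rw [pairDFA_evalFrom]
  constructor
  · rintro ⟨g, hg⟩
    rw [Prod.mk.injEq] at hg
    match hl : projl w, hr : projr w with
    | [], _ => rw [hl] at hg; simp at hg
    | _ :: _, [] => rw [hr] at hg; simp at hg
    | a :: l, b :: r =>
      rw [hl, foldl_upd_none_cons] at hg
      rw [hr, foldl_upd_none_cons] at hg
      refine ⟨List.cons_ne_nil _ _, List.cons_ne_nil _ _, ?_⟩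
      rw [Option.some_inj.mp hg.1, Option.some_inj.mp hg.2]
  · rintro ⟨hl, hr, hprod⟩
    obtain ⟨a, l, hal⟩ := List.exists_cons_of_ne_nil hl
    obtain ⟨b, r, hbr⟩ := List.exists_cons_of_ne_nil hr
    refine ⟨(projl w).prod, ?_⟩
    rw [hal, hbr, foldl_upd_none_cons, foldl_upd_none_cons, ← hal, ← hbr, hprod]

lemma finiteGroup_hasRationalWordProblem (G : Type) [Group G] [Finite G] :
    HasRationalWordProblem G := by
  classical
  haveI := Fintype.ofFinite G
  refine ⟨G, inferInstance, id, ?_, ?_⟩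
  · intro g
    exact ⟨FreeSemigroup.of g, rfl⟩
  · refine ⟨(pairDFA G).accepts, ⟨_, inferInstance, pairDFA G, rfl⟩, ?_⟩
    ext p
    obtain ⟨x, y⟩ := p
    constructor
    · rintro ⟨w, hw, hweq⟩
      rw [Set.mem_setOf_eq, mem_pairDFA_accepts] at hw
      obtain ⟨hl, hr, hprod⟩ := hw
      obtain ⟨w₁, hw₁⟩ := exists_fsw_eq _ hl
      obtain ⟨w₂, hw₂⟩ := exists_fsw_eq _ hr
      refine ⟨w₁, w₂, ?_, ?_⟩
      · rw [lift_eq_prod, lift_eq_prod, hw₁, hw₂]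
        simpa using hprod
      · rw [← hweq, ← FreeMonoid.ofList_toList w, twoTapeHom_ofList, hw₁, hw₂]
    · rintro ⟨w₁, w₂, heq, hpair⟩
      refine ⟨FreeMonoid.ofList ((freeSemigroupToWord w₁).toList.map Sum.inl
        ++ (freeSemigroupToWord w₂).toList.map Sum.inr), ?_, ?_⟩
      · rw [Set.mem_setOf_eq]
        show _ ∈ (pairDFA G).accepts
        rw [mem_pairDFA_accepts, FreeMonoid.toList_ofList, projl_append, projr_append, projl_map_inl, projl_map_inr,
          projr_map_inl, projr_map_inr, List.append_nil, List.nil_append]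
        refine ⟨fsw_toList_ne_nil _, fsw_toList_ne_nil _, ?_⟩
        have h1 := lift_eq_prod (id : G → G) w₁
        have h2 := lift_eq_prod (id : G → G) w₂
        rw [List.map_id] at h1 h2
        rw [← h1, ← h2, heq]
      · rw [twoTapeHom_ofList, projl_append, projr_append, projl_map_inl, projl_map_inr,
          projr_map_inl, projr_map_inr, List.append_nil, List.nil_append, hpair,
          FreeMonoid.ofList_toList, FreeMonoid.ofList_toList]

end FiniteGroup

end AnisimovAux

/-- **Anisimov's theorem.** A group has rational word problem if and only if it is
finite; consequently, a semigroup with rational word problem cannot contain an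
infinite subgroup (a subsemigroup which is a group). -/
theorem group_hasRationalWordProblem_iff_finite :
    (∀ (G : Type) [Group G], HasRationalWordProblem G ↔ Finite G) ∧
    (∀ (S : Type) [Semigroup S], HasRationalWordProblem S →
      ∀ T : Subsemigroup S,
        (∃ e : ↥T, (∀ x : ↥T, e * x = x ∧ x * e = x) ∧
          ∀ x : ↥T, ∃ y : ↥T, x * y = e ∧ y * x = e) →
        Finite ↥T) := by
  constructor
  · intro G _
    constructor
    · intro h
      have hfin : Finite ↥(⊤ : Subsemigroup G) := by
        refine AnisimovAux.subsemigroup_finite h ⊤ ⟨1, trivial⟩ ?_ ?_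
        · intro x
          exact ⟨Subtype.ext (one_mul _), Subtype.ext (mul_one _)⟩
        · intro x
          exact ⟨⟨(x : G)⁻¹, trivial⟩, Subtype.ext (mul_inv_cancel _),
            Subtype.ext (inv_mul_cancel _)⟩
      exact Finite.of_injective (fun g : G => (⟨g, trivial⟩ : ↥(⊤ : Subsemigroup G)))
        (fun a b hab => congrArg Subtype.val hab)
    · intro _
      exact AnisimovAux.finiteGroup_hasRationalWordProblem G
  · intro S _ h T he
    obtain ⟨e, he1, he2⟩ := he
    exact AnisimovAux.subsemigroup_finite h T e he1 he2
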